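/- arXiv:1204.5383 — 7 statements merged into one kernel-verified Lean document; each statement's English description precedes it below -/
import Mathlib

section
/- If an energy ω on partial partitions is h-increasing, then for a node S of a hierarchy H with sons T_1,...,T_p having minimum cuts π_1*,...,π_p*, a cut of S of minimum energy exists among the two candidates: the concatenation π_1* ⊔ π_2* ⊔ ... ⊔ π_p*, and the one-class partition {S}. -/
open Set

/-- A partial partition of `E`: a collection of nonempty pairwise disjoint classes. -/
def IsPP {E : Type*} (π : Set (Set E)) : Prop :=
  (∀ S ∈ π, S.Nonempty) ∧ π.PairwiseDisjoint id

/-- A (finite) hierarchy of partitions of `E`, described by the family of its classes: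
any two classes are nested or disjoint, and the whole space is a class. -/
structure Hierarchy (E : Type*) where
  nodes : Set (Set E)
  finite : nodes.Finite
  nonempty_mem : ∀ S ∈ nodes, S.Nonempty
  nested : ∀ S ∈ nodes, ∀ T ∈ nodes, S ⊆ T ∨ T ⊆ S ∨ S ∩ T = ∅
  top_mem : Set.univ ∈ nodes

/-- A cut of the sub-hierarchy `H(S)`: a partial partition of support `S`
whose classes are classes of the hierarchy. -/
def Cut {E : Type*} (H : Hierarchy E) (S : Set E) (π : Set (Set E)) : Prop :=
  π ⊆ H.nodes ∧ IsPP π ∧ ⋃₀ π = S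

/-- `h`-increasingness of an energy on partial partitions. -/
def HIncreasing {E : Type*} (ω : Set (Set E) → NNReal) : Prop :=
  ∀ π₀ π₁ π₂ : Set (Set E), IsPP π₀ → IsPP π₁ → IsPP π₂ →
    ⋃₀ π₁ = ⋃₀ π₂ → Disjoint (⋃₀ π₁) (⋃₀ π₀) →
    ω π₁ ≤ ω π₂ → ω (π₁ ∪ π₀) ≤ ω (π₂ ∪ π₀)

lemma glue {E : Type*} {p : ℕ} (T : Fin p → Set E)
    (hTdisj : ∀ i j, i ≠ j → Disjoint (T i) (T j))
    (σ : Fin p → Set (Set E))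
    (hpp : ∀ i, IsPP (σ i))
    (hsub : ∀ i, ⋃₀ σ i = T i) :
    IsPP (⋃ i, σ i) ∧ ⋃₀ (⋃ i, σ i) = ⋃ i, T i := by
  constructor
  · constructor
    · intro A hA
      simp only [mem_iUnion] at hA
      obtain ⟨i, hi⟩ := hA
      exact (hpp i).1 A hi
    · intro A hA B hB hAB
      simp only [mem_iUnion] at hA hB
      obtain ⟨i, hi⟩ := hA; obtain ⟨j, hj⟩ := hB
      by_cases h : i = j
      · subst h; exact (hpp i).2 hi hj hAB
      · have hA' : A ⊆ T i := (hsub i) ▸ subset_sUnion_of_mem hi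
        have hB' : B ⊆ T j := (hsub j) ▸ subset_sUnion_of_mem hj
        exact (hTdisj i j h).mono hA' hB'
  · rw [sUnion_iUnion]
    exact iUnion_congr hsub

lemma split_iUnion {E : Type*} {p : ℕ} (f : Fin p → Set (Set E)) (j : Fin p) :
    ⋃ i, f i = f j ∪ ⋃ i, (if i = j then ∅ else f i) := by
  ext A
  simp only [mem_iUnion, mem_union]
  constructor
  · rintro ⟨i, hi⟩
    by_cases h : i = j
    · exact Or.inl (h ▸ hi)
    · exact Or.inr ⟨i, by simp [h, hi]⟩
  · rintro (h | ⟨i, hi⟩)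
    · exact ⟨j, h⟩
    · by_cases h : i = j
      · simp [h] at hi
      · simp [h] at hi; exact ⟨i, hi⟩


/-- if `ω` is `h`-increasing, then for a node `S` of a hierarchy `H`
with sons `T 1, ..., T p` having minimum cuts `πs 1, ..., πs p`, a cut of `S` of
minimum energy exists among the two candidates `πs 1 ⊔ ... ⊔ πs p` and `{S}`. -/
theorem stmt3 {E : Type*} (H : Hierarchy E) (ω : Set (Set E) → NNReal)
    (hω : HIncreasing ω)
    (S : Set E) (hS : S ∈ H.nodes)
    (p : ℕ) (T : Fin p → Set E)
    (hTmem : ∀ i, T i ∈ H.nodes)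
    (hTdisj : ∀ i j, i ≠ j → Disjoint (T i) (T j))
    (hTcover : ⋃ i, T i = S)
    (hTmax : ∀ T' ∈ H.nodes, T' ⊂ S → ∃ i, T' ⊆ T i)
    (πs : Fin p → Set (Set E))
    (hπs : ∀ i, Cut H (T i) (πs i) ∧ ∀ π, Cut H (T i) π → ω (πs i) ≤ ω π) :
    ∀ π, Cut H S π → ω (⋃ i, πs i) ≤ ω π ∨ ω {S} ≤ ω π := by
  intro π hπ
  obtain ⟨hπnodes, ⟨hπne, hπdisj⟩, hπU⟩ := hπ
  by_cases hSπ : S ∈ π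
  · right
    have hπS : π = {S} := by
      apply Subset.antisymm
      · intro A hA
        simp only [mem_singleton_iff]
        by_contra hAS
        obtain ⟨x, hx⟩ := hπne A hA
        have hd : Disjoint A S := hπdisj hA hSπ hAS
        have hxS : x ∈ S := hπU ▸ ⟨A, hA, hx⟩
        exact Set.disjoint_left.mp hd hx hxS
      · simp [hSπ]
    rw [hπS]
  · left
    -- every class of π is a proper subset of S
    have hsub : ∀ A ∈ π, ∃ i, A ⊆ T i := by
      intro A hA
      refine hTmax A (hπnodes hA) ⟨hπU ▸ subset_sUnion_of_mem hA, fun hSA => ?_⟩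
      have : A = S := Subset.antisymm (hπU ▸ subset_sUnion_of_mem hA) hSA
      exact hSπ (this ▸ hA)
    set πp : Fin p → Set (Set E) := fun i => {A ∈ π | A ⊆ T i} with hπp
    have hcut : ∀ i, Cut H (T i) (πp i) := by
      intro i
      refine ⟨fun A hA => hπnodes hA.1, ⟨fun A hA => hπne A hA.1,
        fun A hA B hB => hπdisj hA.1 hB.1⟩, ?_⟩
      apply Subset.antisymm
      · exact sUnion_subset fun A hA => hA.2
      · intro x hx
        have hxS : x ∈ S := hTcover ▸ mem_iUnion.mpr ⟨i, hx⟩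
        obtain ⟨A, hA, hxA⟩ := hπU ▸ hxS
        obtain ⟨j, hj⟩ := hsub A hA
        have hij : j = i := by
          by_contra h
          exact Set.disjoint_left.mp (hTdisj j i h) (hj hxA) hx
        exact ⟨A, ⟨hA, hij ▸ hj⟩, hxA⟩
    have hunion : ⋃ i, πp i = π := by
      apply Subset.antisymm
      · exact iUnion_subset fun i A hA => hA.1
      · intro A hA
        obtain ⟨i, hi⟩ := hsub A hA
        exact mem_iUnion.mpr ⟨i, hA, hi⟩
    -- induction on the set of replaced indices
    have key : ∀ s : Finset (Fin p),
        ω (⋃ i, if i ∈ s then πs i else πp i) ≤ ω π := by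
      intro s
      induction s using Finset.induction_on with
      | empty => simp [hunion]
      | @insert j s hjs ih =>
        have hgs : ∀ (s : Finset (Fin p)) i,
            Cut H (T i) (if i ∈ s then πs i else πp i) := by
          intro s i
          by_cases h : i ∈ s <;> simp [h, (hπs i).1, hcut i]
        set R : Set (Set E) :=
          ⋃ i, (if i = j then ∅ else if i ∈ s then πs i else πp i) with hR
        have hRglue := glue (fun i => if i = j then ∅ else T i)
          (fun i k hik => by
            by_cases hi : i = j <;> by_cases hk : k = j <;>
              simp [hi, hk, hTdisj i k hik] at hik ⊢ <;> exact hTdisj i k hik)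
          (fun i => if i = j then ∅ else if i ∈ s then πs i else πp i)
          (fun i => by
            by_cases h : i = j
            · simp [h, IsPP]
            · simp only [h, if_false]; exact ((hgs s i).2.1))
          (fun i => by
            by_cases h : i = j
            · simp [h]
            · simp only [h, if_false]; exact ((hgs s i).2.2))
        have hsplit1 : (⋃ i, if i ∈ s then πs i else πp i)
            = πp j ∪ R := by
          rw [split_iUnion (fun i => if i ∈ s then πs i else πp i) j]
          simp [hjs, hR]
        have hsplit2 : (⋃ i, if i ∈ insert j s then πs i else πp i)
            = πs j ∪ R := by
          rw [split_iUnion (fun i => if i ∈ insert j s then πs i else πp i) j]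
          congr 1
          · simp
          · apply iUnion_congr
            intro i
            by_cases h : i = j <;> simp [h, Finset.mem_insert]
        have hUj : ⋃₀ πs j = T j := (hπs j).1.2.2
        have hUpj : ⋃₀ πp j = T j := (hcut j).2.2
        have hdisjR : Disjoint (⋃₀ πs j) (⋃₀ R) := by
          rw [hUj, hRglue.2]
          apply disjoint_iUnion_right.mpr
          intro i
          by_cases h : i = j <;> simp [h]
          exact (hTdisj j i (Ne.symm h))
        have hmin : ω (πs j) ≤ ω (πp j) := (hπs j).2 (πp j) (hcut j)
        have hstep := hω R (πs j) (πp j) hRglue.1 (hπs j).1.2.1 (hcut j).2.1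
          (hUj.trans hUpj.symm) hdisjR hmin
        rw [hsplit2]
        rw [hsplit1] at ih
        exact le_trans hstep ih
    have := key Finset.univ
    simpa using this
end

section
/- Let ω be an h-increasing energy on the cuts of a finite hierarchy H, let m > 0 be the minimum of all positive differences ω(π') − ω(π) over pairs of cuts with ω(π) < ω(π'), and let 0 < ε < m. Define ω'(π(S)) = ε if π(S) ≠ {S} and ω'(S) = 0. Then ω + ω' is h-increasing. -/
open Set

/-- with `ω` `h`-increasing on the cuts of a finite hierarchy, `m > 0`
the minimum positive gap between energies of cuts, and `0 < ε < m`, the perturbation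
`ω'` (equal to `ε` on cuts different from the one-class partition and `0` on one-class
partitions) makes `ω + ω'` `h`-increasing. -/
theorem stmt4 {E : Type*} (H : Hierarchy E) (ω : Set (Set E) → NNReal)
    (hω : HIncreasing ω) (m ε : NNReal)
    (hm : ∀ π π' : Set (Set E), (∃ S ∈ H.nodes, Cut H S π) →
      (∃ S ∈ H.nodes, Cut H S π') → ω π < ω π' → ω π + m ≤ ω π')
    (hε0 : 0 < ε) (hεm : ε < m)
    (ω' : Set (Set E) → NNReal)
    (hω' : ∀ π : Set (Set E), (¬ ∃ A : Set E, π = {A}) → ω' π = ε)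
    (hω'0 : ∀ A : Set E, ω' {A} = 0) :
    ∀ S S₀ : Set E, S ∈ H.nodes → S₀ ∈ H.nodes → Disjoint S S₀ →
      ∀ π₀ π₁ π₂ : Set (Set E), Cut H S π₁ → Cut H S π₂ → Cut H S₀ π₀ →
        ω π₁ + ω' π₁ ≤ ω π₂ + ω' π₂ →
        ω (π₁ ∪ π₀) + ω' (π₁ ∪ π₀) ≤ ω (π₂ ∪ π₀) + ω' (π₂ ∪ π₀) := by
  intro S S₀ hS hS₀ hdisj π₀ π₁ π₂ h₁ h₂ h₀ hle
  obtain ⟨h₁n, h₁pp, h₁u⟩ := h₁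
  obtain ⟨h₂n, h₂pp, h₂u⟩ := h₂
  obtain ⟨h₀n, h₀pp, h₀u⟩ := h₀
  have hSne : S.Nonempty := H.nonempty_mem S hS
  have hS₀ne : S₀.Nonempty := H.nonempty_mem S₀ hS₀
  -- first: ω π₁ ≤ ω π₂
  have hωle : ω π₁ ≤ ω π₂ := by
    by_contra hlt
    push_neg at hlt
    have hmle := hm π₂ π₁ ⟨S, hS, h₂n, h₂pp, h₂u⟩ ⟨S, hS, h₁n, h₁pp, h₁u⟩ hlt
    have h2e : ω' π₂ ≤ ε := by
      by_cases h : ∃ A : Set E, π₂ = {A}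
      · obtain ⟨A, rfl⟩ := h; rw [hω'0]; exact zero_le
      · rw [hω' _ h]
    have h1 : ω π₁ ≤ ω π₂ + ε :=
      le_trans (le_add_right le_rfl) (hle.trans (add_le_add_right h2e _))
    exact absurd (hmle.trans_lt (h1.trans_lt (add_lt_add_right hεm _))) (lt_irrefl _)
  have key := hω π₀ π₁ π₂ h₀pp h₁pp h₂pp (h₁u.trans h₂u.symm)
    (by rw [h₁u, h₀u]; exact hdisj) hωle
  -- neither union is a singleton
  have hns : ∀ π : Set (Set E), ⋃₀ π = S → ¬ ∃ A : Set E, π ∪ π₀ = {A} := by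
    rintro π hu ⟨A, hA⟩
    have hπne : π.Nonempty := by
      obtain ⟨x, hx⟩ := hSne
      rw [← hu] at hx
      obtain ⟨T, hT, -⟩ := hx
      exact ⟨T, hT⟩
    have hπ₀ne : π₀.Nonempty := by
      obtain ⟨x, hx⟩ := hS₀ne
      rw [← h₀u] at hx
      obtain ⟨T, hT, -⟩ := hx
      exact ⟨T, hT⟩
    have hπ : π = {A} := by
      rcases (Set.subset_singleton_iff_eq.mp (hA ▸ Set.subset_union_left)) with h | h
      · exact absurd h hπne.ne_empty
      · exact h
    have hπ₀ : π₀ = {A} := by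
      rcases (Set.subset_singleton_iff_eq.mp (hA ▸ Set.subset_union_right)) with h | h
      · exact absurd h hπ₀ne.ne_empty
      · exact h
    have hSA : S = A := by rw [← hu, hπ, Set.sUnion_singleton]
    have hS₀A : S₀ = A := by rw [← h₀u, hπ₀, Set.sUnion_singleton]
    rw [hSA, hS₀A] at hdisj
    exact (hSA ▸ hSne).ne_empty (disjoint_self.mp hdisj)
  rw [hω' _ (hns π₁ h₁u), hω' _ (hns π₂ h₂u)]
  exact add_le_add_left key _
end

section
/- Let {ω_i : i ∈ I} be a finite family of energies on partial partitions satisfying the cross condition: for all i, j ∈ I and all partial partitions π_1, π_2 of the same support and π_0 of disjoint support, ω_i(π_1) ≤ ω_j(π_2) implies ω_i(π_1 ⊔ π_0) ≤ ω_j(π_2 ⊔ π_0). Then the pointwise infimum ∧_i ω_i is h-increasing: (∧ω_i)(π) ≤ (∧ω_i)(π') implies (∧ω_i)(π ⊔ π_0) ≤ (∧ω_i)(π' ⊔ π_0). -/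
open Set

/-- if a finite family `{ω i}` of energies satisfies the cross condition
`ω i π₁ ≤ ω j π₂ → ω i (π₁ ⊔ π₀) ≤ ω j (π₂ ⊔ π₀)` (for `π₁, π₂` of the same support
and `π₀` of disjoint support), then the pointwise infimum `⨅ i, ω i` is `h`-increasing. -/
theorem stmt9 {E : Type*} {I : Type*} [Fintype I] [Nonempty I]
    (ω : I → Set (Set E) → NNReal)
    (hcross : ∀ i j : I, ∀ π₀ π₁ π₂ : Set (Set E), IsPP π₀ → IsPP π₁ → IsPP π₂ →
      ⋃₀ π₁ = ⋃₀ π₂ → Disjoint (⋃₀ π₁) (⋃₀ π₀) →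
      ω i π₁ ≤ ω j π₂ → ω i (π₁ ∪ π₀) ≤ ω j (π₂ ∪ π₀)) :
    HIncreasing (fun π => ⨅ i, ω i π) := by
  intro π₀ π₁ π₂ h0 h1 h2 hsup hdisj hle
  simp only at hle ⊢
  obtain ⟨i, hi⟩ := Finite.exists_min (fun i => ω i π₁)
  refine le_ciInf fun j => ?_
  refine le_trans (ciInf_le (OrderBot.bddBelow _) i) ?_
  refine hcross i j π₀ π₁ π₂ h0 h1 h2 hsup hdisj ?_
  calc ω i π₁ = ⨅ k, ω k π₁ := le_antisymm (le_ciInf hi) (ciInf_le (OrderBot.bddBelow _) i)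
    _ ≤ ⨅ k, ω k π₂ := hle
    _ ≤ ω j π₂ := ciInf_le (OrderBot.bddBelow _) j
end

section
/- Under the same cross condition, the pointwise supremum ∨_i ω_i of a finite family {ω_i} is h-increasing. -/
open Set

/-- under the same cross condition, the pointwise supremum
`⨆ i, ω i` of a finite family is `h`-increasing. -/
theorem stmt10 {E : Type*} {I : Type*} [Fintype I] [Nonempty I]
    (ω : I → Set (Set E) → NNReal)
    (hcross : ∀ i j : I, ∀ π₀ π₁ π₂ : Set (Set E), IsPP π₀ → IsPP π₁ → IsPP π₂ →
      ⋃₀ π₁ = ⋃₀ π₂ → Disjoint (⋃₀ π₁) (⋃₀ π₀) →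
      ω i π₁ ≤ ω j π₂ → ω i (π₁ ∪ π₀) ≤ ω j (π₂ ∪ π₀)) :
    HIncreasing (fun π => ⨆ i, ω i π) := by
  intro π₀ π₁ π₂ h0 h1 h2 hsupp hdisj hle
  simp only at hle ⊢
  obtain ⟨j, hj⟩ := Finite.exists_max (fun j => ω j π₂)
  refine ciSup_le fun i => ?_
  have h1i : ω i π₁ ≤ ω j π₂ := le_trans (le_ciSup (f := fun i => ω i π₁) (Finite.bddAbove_range _) i) (le_trans hle (ciSup_le hj))
  exact le_trans (hcross i j π₀ π₁ π₂ h0 h1 h2 hsupp hdisj h1i) (le_ciSup (f := fun k => ω k (π₂ ∪ π₀)) (Finite.bddAbove_range _) j)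
end

section
/- The ∨-composed extension of any set energy is h-increasing: if ω : P(E) → ℝ≥0 and one defines ω(π) = sup{ω(S) : S class of π} for partial partitions π, then this extension satisfies ω(π_1) ≤ ω(π_2) ⟹ ω(π_1 ⊔ π_0) ≤ ω(π_2 ⊔ π_0). -/
open Set

/-- A (finite-class) partial partition of `E`, given as a finite collection of
nonempty pairwise disjoint classes. -/
def IsPPF {E : Type*} (π : Finset (Set E)) : Prop :=
  (∀ S ∈ π, S.Nonempty) ∧ (π : Set (Set E)).PairwiseDisjoint id

/-- Support of a finite partial partition. -/
def suppF {E : Type*} (π : Finset (Set E)) : Set E := ⋃₀ (π : Set (Set E))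

open scoped Classical in
/-- the `∨`-composed extension `π ↦ sup {ωs S : S class of π}` of any
set energy `ωs : P(E) → ℝ≥0` is `h`-increasing. -/
theorem stmt12 {E : Type*} (ωs : Set E → NNReal) :
    ∀ π₀ π₁ π₂ : Finset (Set E), IsPPF π₀ → IsPPF π₁ → IsPPF π₂ →
      suppF π₁ = suppF π₂ → Disjoint (suppF π₁) (suppF π₀) →
      π₁.sup ωs ≤ π₂.sup ωs →
      (π₁ ∪ π₀).sup ωs ≤ (π₂ ∪ π₀).sup ωs := by
  intro π₀ π₁ π₂ _ _ _ _ _ h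
  simp only [Finset.sup_union]
  exact sup_le_sup_right h _
end

section
/- The ∧-composed (infimum) extension of any set energy to partial partitions, ω(π) = inf{ω(S) : S class of π}, is h-increasing. -/
open Set

open scoped Classical in
/-- the `∧`-composed (infimum) extension
`π ↦ inf {ωs S : S class of π}` of any set energy is `h`-increasing. -/
theorem stmt13 {E : Type*} (ωs : Set E → NNReal) :
    ∀ π₀ π₁ π₂ : Finset (Set E), IsPPF π₀ → IsPPF π₁ → IsPPF π₂ →
      suppF π₁ = suppF π₂ → Disjoint (suppF π₁) (suppF π₀) →
      sInf (ωs '' (π₁ : Set (Set E))) ≤ sInf (ωs '' (π₂ : Set (Set E))) →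
      sInf (ωs '' ((π₁ ∪ π₀ : Finset (Set E)) : Set (Set E))) ≤
        sInf (ωs '' ((π₂ ∪ π₀ : Finset (Set E)) : Set (Set E))) := by
  intro π₀ π₁ π₂ h₀ h₁ h₂ hsupp _ hle
  rcases (π₂ ∪ π₀).eq_empty_or_nonempty with he | hne
  · -- both unions empty
    have h2 : π₂ = ∅ := by
      have := Finset.union_eq_empty.mp he; exact this.1
    have h0 : π₀ = ∅ := (Finset.union_eq_empty.mp he).2
    have hs1 : suppF π₁ = ∅ := by
      rw [hsupp, h2]; simp [suppF]
    have h1e : π₁ = ∅ := by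
      by_contra h
      obtain ⟨S, hS⟩ := Finset.nonempty_iff_ne_empty.mpr h
      obtain ⟨x, hx⟩ := h₁.1 S hS
      have : x ∈ suppF π₁ := ⟨S, by exact_mod_cast hS, hx⟩
      rw [hs1] at this; exact this
    simp [h1e, h0, h2]
  · apply le_csInf
    · obtain ⟨S, hS⟩ := hne
      exact ⟨ωs S, ⟨S, by exact_mod_cast hS, rfl⟩⟩
    · rintro b ⟨S, hS, rfl⟩
      have hS' : S ∈ π₂ ∨ S ∈ π₀ := by
        simpa [Finset.mem_union] using hS
      rcases hS' with hS2 | hS0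
      · -- π₁ nonempty since π₂ nonempty and supports equal
        obtain ⟨x, hx⟩ := h₂.1 S hS2
        have hx2 : x ∈ suppF π₂ := ⟨S, by exact_mod_cast hS2, hx⟩
        have hx1 : x ∈ suppF π₁ := by rw [hsupp]; exact hx2
        obtain ⟨T, hT, _⟩ := hx1
        have hT' : T ∈ π₁ := by exact_mod_cast hT
        have step1 : sInf (ωs '' ((π₁ ∪ π₀ : Finset (Set E)) : Set (Set E))) ≤
            sInf (ωs '' (π₁ : Set (Set E))) := by
          apply csInf_le_csInf (OrderBot.bddBelow _)
          · exact ⟨ωs T, ⟨T, hT', rfl⟩⟩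
          · exact Set.image_mono (by intro U hU; simp at hU ⊢; exact Or.inl hU)
        have step3 : sInf (ωs '' (π₂ : Set (Set E))) ≤ ωs S :=
          csInf_le (OrderBot.bddBelow _) ⟨S, by exact_mod_cast hS2, rfl⟩
        exact step1.trans (hle.trans step3)
      · exact csInf_le (OrderBot.bddBelow _)
          ⟨S, by simp [Finset.mem_union, hS0], rfl⟩
end

section
/- Climbing energies yield an increasing family of minimum cuts: if {ω^j : 1 ≤ j ≤ p} is a family of energies on the cuts of a finite hierarchy H such that each ω^j is h-increasing, each ω^j has a unique minimum cut on every sub-hierarchy H(S), and the family is scale increasing, then the minimum cuts π^{j*} of H satisfy π^{j*} ≤ π^{k*} (refinement) whenever j ≤ k; hence {π^{j*}} forms a chain of partitions. -/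
open Set

/-- Scale increasingness of a family of energies on the cuts of a hierarchy `H`:
for `j ≤ k`, each node `S` and each cut `π` of `S`,
`ω j {S} ≤ ω j π` implies `ω k {S} ≤ ω k π`. -/
def ScaleIncreasing {E : Type*} (H : Hierarchy E) {p : ℕ}
    (ω : Fin p → Set (Set E) → NNReal) : Prop :=
  ∀ j k : Fin p, j ≤ k → ∀ S ∈ H.nodes, ∀ π : Set (Set E), Cut H S π →
    ω j {S} ≤ ω j π → ω k {S} ≤ ω k π

lemma isPP_union {E : Type*} {π₁ π₀ : Set (Set E)} (h₁ : IsPP π₁) (h₀ : IsPP π₀)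
    (hd : Disjoint (⋃₀ π₁) (⋃₀ π₀)) : IsPP (π₁ ∪ π₀) := by
  constructor
  · rintro S (hS | hS)
    exacts [h₁.1 S hS, h₀.1 S hS]
  · rintro a (ha | ha) b (hb | hb) hab
    · exact h₁.2 ha hb hab
    · exact Disjoint.mono (Set.subset_sUnion_of_mem ha) (Set.subset_sUnion_of_mem hb) hd
    · exact (Disjoint.mono (Set.subset_sUnion_of_mem hb) (Set.subset_sUnion_of_mem ha) hd).symm
    · exact h₀.2 ha hb hab

/-- climbing theorem, "if" part: if each `ω j` is `h`-increasing,
each `ω j` has a unique minimum cut `πstar j S` on every sub-hierarchy `H(S)`, and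
the family `{ω j}` is scale increasing, then the minimum cuts of `H` increase with
the scale: for `j ≤ k`, every class of `πstar j univ` is contained in a class of
`πstar k univ`, i.e. the minimum cuts form a chain for the refinement ordering. -/
theorem stmt16 {E : Type*} (H : Hierarchy E) (p : ℕ)
    (ω : Fin p → Set (Set E) → NNReal)
    (hh : ∀ j, HIncreasing (ω j))
    (πstar : Fin p → Set E → Set (Set E))
    (hmin : ∀ j, ∀ S ∈ H.nodes, Cut H S (πstar j S) ∧
      ∀ π, Cut H S π → π ≠ πstar j S → ω j (πstar j S) < ω j π)
    (hscale : ScaleIncreasing H ω) :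
    ∀ j k : Fin p, j ≤ k →
      ∀ C ∈ πstar j Set.univ, ∃ C' ∈ πstar k Set.univ, C ⊆ C' := by
  intro j k hjk C hC
  classical
  obtain ⟨cutj, uniqj⟩ := hmin j Set.univ H.top_mem
  obtain ⟨cutk, uniqk⟩ := hmin k Set.univ H.top_mem
  have hCnode : C ∈ H.nodes := cutj.1 hC
  have hCne : C.Nonempty := H.nonempty_mem C hCnode
  -- Key lemma: a class D of the minimum cut of univ at any scale l is the minimum
  -- cut of the sub-hierarchy H(D): ω l {D} ≤ ω l π for every cut π of D.
  have key : ∀ l : Fin p, ∀ D ∈ πstar l Set.univ, ∀ π, Cut H D π → ω l {D} ≤ ω l π := by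
    intro l D hD π hπ
    obtain ⟨cutl, uniql⟩ := hmin l Set.univ H.top_mem
    have hDne : D.Nonempty := H.nonempty_mem D (cutl.1 hD)
    by_contra hlt
    push_neg at hlt
    set π₀ : Set (Set E) := πstar l Set.univ \ {D} with hπ₀def
    have hdisj0 : ∀ T ∈ π₀, Disjoint T D := by
      intro T hT
      exact cutl.2.1.2 hT.1 hD (fun h => hT.2 (by simp [h]))
    have hdisjU : Disjoint D (⋃₀ π₀) := by
      rw [Set.disjoint_sUnion_right]
      exact fun T hT => (hdisj0 T hT).symm
    -- D ∉ π, since otherwise π = {D}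
    have hDπ : D ∉ π := by
      intro hDmem
      have : π = {D} := by
        ext T
        constructor
        · intro hT
          by_contra hTD
          have hTD' : T ≠ D := by simpa using hTD
          have hdis : Disjoint T D := hπ.2.1.2 hT hDmem hTD'
          have hTsub : T ⊆ D := hπ.2.2 ▸ Set.subset_sUnion_of_mem hT
          have : T = ∅ := by
            rw [← Set.subset_empty_iff]
            exact fun x hx => (Set.disjoint_iff.mp hdis) ⟨hx, hTsub hx⟩
          exact absurd this (Set.nonempty_iff_ne_empty.mp (hπ.2.1.1 T hT))
        · intro hT
          simpa [Set.mem_singleton_iff.mp hT] using hDmem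
      rw [this] at hlt
      exact lt_irrefl _ hlt
    have hsupπ : ⋃₀ π = D := hπ.2.2
    have hppD : IsPP {D} := by
      constructor
      · intro S hS; rw [Set.mem_singleton_iff.mp hS]; exact hDne
      · exact Set.pairwiseDisjoint_singleton D id
    have hpp0 : IsPP π₀ := ⟨fun S hS => cutl.2.1.1 S hS.1, cutl.2.1.2.subset Set.diff_subset⟩
    have hdisjπ : Disjoint (⋃₀ π) (⋃₀ π₀) := hsupπ ▸ hdisjU
    have hstar_eq : {D} ∪ π₀ = πstar l Set.univ := by
      rw [hπ₀def, Set.singleton_union, Set.insert_diff_singleton, Set.insert_eq_of_mem hD]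
    have hinc := hh l π₀ π {D} hpp0 hπ.2.1 hppD (by rw [hsupπ, Set.sUnion_singleton])
      hdisjπ (le_of_lt hlt)
    rw [hstar_eq] at hinc
    -- π ∪ π₀ is a cut of univ distinct from πstar l univ
    have hcutU : Cut H Set.univ (π ∪ π₀) := by
      refine ⟨Set.union_subset hπ.1 (Set.diff_subset.trans cutl.1), isPP_union hπ.2.1 hpp0 hdisjπ, ?_⟩
      rw [Set.sUnion_union, hsupπ, ← Set.sUnion_singleton D, ← Set.sUnion_union, hstar_eq, cutl.2.2]
    have hne : π ∪ π₀ ≠ πstar l Set.univ := by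
      intro h
      have : D ∈ π ∪ π₀ := h ▸ hD
      rcases this with h' | h'
      · exact hDπ h'
      · exact h'.2 rfl
    exact lt_irrefl _ (lt_of_lt_of_le (uniql (π ∪ π₀) hcutU hne) hinc)
  -- ω k {C} ≤ ω k π for every cut π of C (via scale increasingness)
  have keyk : ∀ π, Cut H C π → ω k {C} ≤ ω k π := fun π hπ =>
    hscale j k hjk C hCnode π hπ (key j C hC π hπ)
  -- pick the class C' of πstar k univ containing a point of C
  obtain ⟨x, hx⟩ := hCne
  have hxU : x ∈ ⋃₀ πstar k Set.univ := by rw [cutk.2.2]; trivial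
  obtain ⟨C', hC', hxC'⟩ := hxU
  refine ⟨C', hC', ?_⟩
  by_contra hnsub
  -- C' ⊆ C by nestedness
  have hC'node : C' ∈ H.nodes := cutk.1 hC'
  have hC'subC : C' ⊆ C := by
    rcases H.nested C hCnode C' hC'node with h | h | h
    · exact absurd h hnsub
    · exact h
    · exact absurd (Set.mem_inter hx hxC') (h ▸ Set.notMem_empty x)
  -- every class of πstar k univ is inside C or disjoint from C
  have hclass : ∀ T ∈ πstar k Set.univ, T ⊆ C ∨ Disjoint T C := by
    intro T hT
    rcases H.nested T (cutk.1 hT) C hCnode with h | h | h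
    · exact Or.inl h
    · -- C ⊆ T : then T meets C', so T = C', so C ⊆ C', contradiction
      exfalso
      have hC'T : ¬Disjoint T C' := by
        intro hd
        obtain ⟨y, hy⟩ := H.nonempty_mem C' hC'node
        exact (Set.disjoint_iff.mp hd) ⟨h (hC'subC hy), hy⟩ 
      have : T = C' := by
        by_contra hne
        exact hC'T (cutk.2.1.2 hT hC' hne)
      exact hnsub (this ▸ h)
    · exact Or.inr (Set.disjoint_iff_inter_eq_empty.mpr h)
  have hCnotmem : C ∉ πstar k Set.univ := by
    intro hmem
    have : C = C' := by
      by_contra hne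
      exact (Set.disjoint_iff.mp (cutk.2.1.2 hmem hC' hne)) ⟨hx, hxC'⟩
    exact hnsub (this ▸ Set.Subset.rfl)
  set πC : Set (Set E) := {T ∈ πstar k Set.univ | T ⊆ C} with hπCdef
  set π₀ : Set (Set E) := {T ∈ πstar k Set.univ | Disjoint T C} with hπ₀def
  have hsplit : πC ∪ π₀ = πstar k Set.univ := by
    ext T
    constructor
    · rintro (h | h) <;> exact h.1
    · intro hT
      rcases hclass T hT with h | h
      · exact Or.inl ⟨hT, h⟩
      · exact Or.inr ⟨hT, h⟩
  have hsupC : ⋃₀ πC = C := by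
    apply Set.Subset.antisymm
    · exact Set.sUnion_subset fun T hT => hT.2
    · intro y hy
      have : y ∈ ⋃₀ πstar k Set.univ := by rw [cutk.2.2]; trivial
      obtain ⟨T, hT, hyT⟩ := this
      rcases hclass T hT with h | h
      · exact ⟨T, ⟨hT, h⟩, hyT⟩
      · exact (Set.disjoint_iff.mp h ⟨hyT, hy⟩).elim
  have hdisjU : Disjoint C (⋃₀ π₀) := by
    rw [Set.disjoint_sUnion_right]
    exact fun T hT => hT.2.symm
  have hcutC : Cut H C πC :=
    ⟨(Set.sep_subset _ _).trans cutk.1,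
     ⟨fun S hS => cutk.2.1.1 S hS.1, cutk.2.1.2.subset (Set.sep_subset _ _)⟩, hsupC⟩
  have hppC : IsPP {C} := by
    constructor
    · intro S hS; rw [Set.mem_singleton_iff.mp hS]; exact ⟨x, hx⟩
    · exact Set.pairwiseDisjoint_singleton C id
  have hpp0 : IsPP π₀ :=
    ⟨fun S hS => cutk.2.1.1 S hS.1, cutk.2.1.2.subset (Set.sep_subset _ _)⟩
  have hinc := hh k π₀ {C} πC hpp0 hppC hcutC.2.1
    (by rw [Set.sUnion_singleton, hsupC]) (by rw [Set.sUnion_singleton]; exact hdisjU)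
    (keyk πC hcutC)
  rw [hsplit] at hinc
  have hcutU : Cut H Set.univ ({C} ∪ π₀) := by
    refine ⟨Set.union_subset (by simpa using hCnode) ((Set.sep_subset _ _).trans cutk.1),
      isPP_union hppC hpp0 (by rw [Set.sUnion_singleton]; exact hdisjU), ?_⟩
    rw [Set.sUnion_union, Set.sUnion_singleton, ← hsupC, ← Set.sUnion_union, hsplit, cutk.2.2]
  have hne : {C} ∪ π₀ ≠ πstar k Set.univ := by
    intro h
    exact hCnotmem (h ▸ Or.inl rfl)
  exact lt_irrefl _ (lt_of_lt_of_le (uniqk ({C} ∪ π₀) hcutU hne) hinc)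
end
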